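/- Let V be a finite-dimensional real inner product space, A : V → V a linear automorphism, v ∈ V a nonzero vector, and w a unit vector orthogonal to v. Let P = span{v, w} and let π denote the orthogonal projection of V onto the orthogonal complement of A v. Then the absolute value of the determinant of the restriction A|_P : P → A(P) (computed with respect to orthonormal bases of P and A(P)) satisfies |det(A|_P)| = (‖A v‖/‖v‖) · ‖π(A w)‖. -/

import Mathlib

open RealInnerProductSpace

/-- For a linear automorphism `A` of a finite-dimensional real inner product space, a
nonzero vector `v`, a unit vector `w ⟂ v`, the 2-plane `P = span{v,w}` and the orthogonal
projection `π` onto `(A v)ᗮ`, the determinant of the restriction `A|_P : P → A(P)`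
(computed w.r.t. orthonormal bases of `P` and `A(P)`) satisfies
`|det (A|_P)| = (‖A v‖/‖v‖) · ‖π (A w)‖`. -/
theorem abs_det_restrict_two_plane {V : Type*} [NormedAddCommGroup V]
    [InnerProductSpace ℝ V] [FiniteDimensional ℝ V]
    (A : V ≃ₗ[ℝ] V) (v w : V) (hv : v ≠ 0) (hw : ‖w‖ = 1)
    (hvw : ⟪v, w⟫ = 0)
    (P Q : Submodule ℝ V) (hP : P = Submodule.span ℝ {v, w})
    (hQ : Q = P.map A.toLinearMap)
    (hAPQ : ∀ x ∈ P, A.toLinearMap x ∈ Q)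
    (b : OrthonormalBasis (Fin 2) ℝ P) (c : OrthonormalBasis (Fin 2) ℝ Q) :
    |(LinearMap.toMatrix b.toBasis c.toBasis (A.toLinearMap.restrict hAPQ)).det| =
      (‖A v‖ / ‖v‖) * ‖Submodule.orthogonalProjectionOnto ((ℝ ∙ (A v))ᗮ) (A w)‖ := by
  classical
  have hAv : A v ≠ 0 := by
    intro h
    exact hv (by simpa using A.injective (by simpa using h))
  have hnv : ‖v‖ ≠ 0 := norm_ne_zero_iff.mpr hv
  have hnAv : ‖A v‖ ≠ 0 := norm_ne_zero_iff.mpr hAv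
  set u : V := ‖v‖⁻¹ • v with hu
  have hnu : ‖u‖ = 1 := by
    rw [hu, norm_smul, norm_inv, norm_norm, inv_mul_cancel₀ hnv]
  have huw : (inner ℝ u w : ℝ) = 0 := by
    rw [hu, real_inner_smul_left, hvw, mul_zero]
  have hwu : (inner ℝ w u : ℝ) = 0 := by rw [real_inner_comm]; exact huw
  set f : Fin 2 → V := ![u, w] with hf
  have hon : Orthonormal ℝ f := by
    constructor
    · intro i; fin_cases i
      · simpa [f] using hnu
      · simpa [f] using hw
    · intro i j hij
      fin_cases i <;> fin_cases j <;> simp only [f, Matrix.cons_val_zero, Matrix.cons_val_one,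
        Matrix.head_cons] at hij ⊢
      · exact absurd rfl hij
      · exact huw
      · exact hwu
      · exact absurd rfl hij
  have hvP : v ∈ P := by rw [hP]; exact Submodule.subset_span (Set.mem_insert _ _)
  have hwP : w ∈ P := by
    rw [hP]; exact Submodule.subset_span (Set.mem_insert_of_mem _ rfl)
  have hmem : ∀ i, f i ∈ P := by
    intro i; fin_cases i
    · simpa [f, hu] using Submodule.smul_mem P (‖v‖⁻¹) hvP
    · simpa [f] using hwP
  set g : Fin 2 → P := Set.codRestrict f P hmem with hg
  have hong : Orthonormal ℝ g := hon.codRestrict P hmem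
  have hcard : Fintype.card (Fin 2) = Module.finrank ℝ P :=
    (Module.finrank_eq_card_basis b.toBasis).symm
  have hsp : ⊤ ≤ Submodule.span ℝ (Set.range g) :=
    (hong.linearIndependent.span_eq_top_of_card_eq_finrank hcard).ge
  set e : OrthonormalBasis (Fin 2) ℝ P := OrthonormalBasis.mk hong hsp with he
  set Mlin := A.toLinearMap.restrict hAPQ with hM
  set N := LinearMap.toMatrix e.toBasis c.toBasis Mlin with hN
  -- change of basis: reduce to the orthonormal basis `e`
  have hchange : LinearMap.toMatrix b.toBasis c.toBasis Mlin
      = N * e.toBasis.toMatrix b.toBasis :=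
    (linearMap_toMatrix_mul_basis_toMatrix b.toBasis e.toBasis c.toBasis Mlin).symm
  have hdet1 : |(e.toBasis.toMatrix ⇑b.toBasis).det| = 1 := by
    have h2 := e.det_to_matrix_orthonormalBasis_real b
    rw [Module.Basis.det_apply] at h2
    rw [show ⇑b.toBasis = ⇑b from b.coe_toBasis]
    rcases h2 with h | h <;> rw [h] <;> norm_num
  have habs : |(LinearMap.toMatrix b.toBasis c.toBasis Mlin).det| = |N.det| := by
    rw [hchange, Matrix.det_mul, abs_mul, hdet1, mul_one]
  -- inner products via coordinates in c
  have key : ∀ x y : Q, (inner ℝ x y : ℝ) = ∑ k, c.repr x k * c.repr y k := by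
    intro x y
    rw [← c.repr.inner_map_map x y, PiLp.inner_apply]
    simp [RCLike.inner_apply]
    ring
  have hNapply : ∀ i j, N i j = c.repr (Mlin (e j)) i := by
    intro i j
    rw [hN, LinearMap.toMatrix_apply]
    simp
  have he0 : (↑(e 0) : V) = u := by
    rw [he, OrthonormalBasis.coe_mk]; rfl
  have he1 : (↑(e 1) : V) = w := by
    rw [he, OrthonormalBasis.coe_mk]; rfl
  have hMe : ∀ i, (↑(Mlin (e i)) : V) = A (↑(e i) : V) := by
    intro i; rfl
  have hgram : ∀ i j, (N.transpose * N) i j = (inner ℝ (A (↑(e i) : V)) (A (↑(e j) : V)) : ℝ) := by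
    intro i j
    rw [Matrix.mul_apply]
    have : (inner ℝ (Mlin (e i)) (Mlin (e j)) : ℝ) = ∑ k, c.repr (Mlin (e i)) k * c.repr (Mlin (e j)) k :=
      key _ _
    rw [Submodule.coe_inner] at this
    rw [hMe, hMe] at this
    rw [this]
    refine Finset.sum_congr rfl fun k _ => ?_
    rw [Matrix.transpose_apply, hNapply, hNapply]
  -- determinant squared is the Gram determinant
  have hsq : N.det ^ 2 = ‖A u‖ ^ 2 * ‖A w‖ ^ 2 - (inner ℝ (A u) (A w) : ℝ) ^ 2 := by
    have h1 : N.det ^ 2 = (N.transpose * N).det := by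
      rw [Matrix.det_mul, Matrix.det_transpose, sq]
    rw [h1, Matrix.det_fin_two, hgram, hgram, hgram, hgram, he0, he1,
      real_inner_self_eq_norm_sq, real_inner_self_eq_norm_sq, real_inner_comm (A w) (A u)]
    ring
  -- compute in terms of A v
  have hAu : A u = ‖v‖⁻¹ • A v := by rw [hu, map_smul]
  have hnAu : ‖A u‖ ^ 2 = ‖v‖⁻¹ ^ 2 * ‖A v‖ ^ 2 := by
    rw [hAu, norm_smul, norm_inv, norm_norm, mul_pow]
  have hiAu : (inner ℝ (A u) (A w) : ℝ) = ‖v‖⁻¹ * (inner ℝ (A v) (A w) : ℝ) := by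
    rw [hAu, real_inner_smul_left]
  -- the right hand side
  set r : ℝ := (‖A v‖ / ‖v‖) * ‖Submodule.orthogonalProjectionOnto ((ℝ ∙ (A v))ᗮ) (A w)‖ with hr
  have hrnn : 0 ≤ r := by positivity
  have hproj : ‖(Submodule.orthogonalProjectionOnto (ℝ ∙ (A v)) (A w) : V)‖ ^ 2
      = (inner ℝ (A v) (A w) : ℝ) ^ 2 / ‖A v‖ ^ 2 := by
    rw [← Submodule.starProjection_apply, Submodule.starProjection_singleton, norm_smul, Real.norm_eq_abs, mul_pow, sq_abs, div_pow]
    field_simp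
    simp only [RCLike.ofReal_real_eq_id, id]
    ring
  have hpyth : ‖Submodule.orthogonalProjectionOnto ((ℝ ∙ (A v))ᗮ) (A w)‖ ^ 2
      = ‖A w‖ ^ 2 - (inner ℝ (A v) (A w) : ℝ) ^ 2 / ‖A v‖ ^ 2 := by
    have := Submodule.norm_sq_eq_add_norm_sq_projection (A w) (ℝ ∙ (A v))
    have hco : ‖Submodule.orthogonalProjectionOnto (ℝ ∙ (A v)) (A w)‖
        = ‖(Submodule.orthogonalProjectionOnto (ℝ ∙ (A v)) (A w) : V)‖ := rfl
    rw [hco, hproj] at this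
    linarith
  have hr2 : r ^ 2 = ‖A u‖ ^ 2 * ‖A w‖ ^ 2 - (inner ℝ (A u) (A w) : ℝ) ^ 2 := by
    rw [hr, mul_pow, hpyth, hnAu, hiAu, mul_pow, div_pow]
    field_simp
  rw [habs, hr]
  rw [← hr]
  calc |N.det| = Real.sqrt (N.det ^ 2) := (Real.sqrt_sq_eq_abs _).symm
    _ = Real.sqrt (r ^ 2) := by rw [hsq, ← hr2]
    _ = r := Real.sqrt_sq hrnn
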